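/- Let F be a forest in which every vertex of degree at least 2 has at most one neighbor of degree 1, and suppose F has no isolated vertices and no component of order 2. If U is the set of vertices of degree at least 2 that are not support vertices, then F has a dominating set of size at most n_1 + ⌈(|U| - 2)/3⌉, where n_1 is the number of vertices of degree 1 (assuming U is nonempty). -/

import Mathlib

open SimpleGraph Finset

/-- The degree of a vertex `v` in a simple graph `G`. -/
noncomputable def deg {V : Type*} [Fintype V] (G : SimpleGraph V) (v : V) : ℕ :=
  Nat.card {u // G.Adj v u}

/-- The degree sequence of `G` as a multiset. -/
noncomputable def degSeq {V : Type*} [Fintype V] (G : SimpleGraph V) : Multiset ℕ :=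
  Finset.univ.val.map (deg G)

/-- `D` is a dominating set of `G`. -/
def IsDomSet {V : Type*} (G : SimpleGraph V) (D : Set V) : Prop :=
  ∀ v ∉ D, ∃ u ∈ D, G.Adj u v

/-- The domination number of `G`. -/
noncomputable def domNum {V : Type*} [Fintype V] (G : SimpleGraph V) : ℕ :=
  sInf {k | ∃ D : Set V, IsDomSet G D ∧ D.ncard = k}

/-- `I` is an independent set of `G`. -/
def IsIndepSet' {V : Type*} (G : SimpleGraph V) (I : Set V) : Prop :=
  ∀ u ∈ I, ∀ v ∈ I, ¬ G.Adj u v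

/-- The independence number of `G`. -/
noncomputable def indepNum {V : Type*} [Fintype V] (G : SimpleGraph V) : ℕ :=
  sSup {k | ∃ I : Set V, IsIndepSet' G I ∧ I.ncard = k}

/-- `v` is a support vertex of `G`: degree at least 2 with a neighbor of degree 1. -/
noncomputable def IsSupport {V : Type*} [Fintype V] (G : SimpleGraph V) (v : V) : Prop :=
  2 ≤ deg G v ∧ ∃ u, G.Adj v u ∧ deg G u = 1

section Aux

variable {V : Type*} [Fintype V] {G : SimpleGraph V}

lemma deg_eq_ncard (G : SimpleGraph V) (v : V) : deg G v = {u | G.Adj v u}.ncard := rfl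

lemma one_le_deg_of_adj {v u : V} (h : G.Adj v u) : 1 ≤ deg G u := by
  have : Nonempty {x // G.Adj u x} := ⟨v, h.symm⟩
  exact Nat.card_pos

lemma leaf_unique {u a b : V} (h : deg G u = 1) (ha : G.Adj u a) (hb : G.Adj u b) : a = b := by
  have hs := (Nat.card_eq_one_iff_unique.mp h).1
  exact congrArg Subtype.val (hs.elim ⟨a, ha⟩ ⟨b, hb⟩)

lemma walk_closed (S : Set V) (hS : ∀ x ∈ S, ∀ y, G.Adj x y → y ∈ S) :
    ∀ {u v : V}, G.Walk u v → u ∈ S → v ∈ S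
  | _, _, SimpleGraph.Walk.nil, hu => hu
  | _, _, SimpleGraph.Walk.cons h p, hu => walk_closed S hS p (hS _ hu _ h)

/-- each leaf has a support vertex as neighbor, given no K2 components -/
lemma support_of_leaf (h2 : ∀ C : G.ConnectedComponent, C.supp.ncard ≠ 2)
    {u : V} (hu : deg G u = 1) : ∃ w, G.Adj u w ∧ IsSupport G w := by
  have hne : Nonempty {x // G.Adj u x} := (Nat.card_eq_one_iff_unique.mp hu).2
  obtain ⟨w, hw⟩ := hne
  refine ⟨w, hw, ?_, u, hw.symm, hu⟩
  by_contra hlt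
  push_neg at hlt
  have hw1 : deg G w = 1 := le_antisymm (by omega) (one_le_deg_of_adj hw)
  -- the component of u is {u, w}, contradiction with h2
  have hclosed : ∀ x ∈ ({u, w} : Set V), ∀ y, G.Adj x y → y ∈ ({u, w} : Set V) := by
    rintro x (rfl | rfl) y hy
    · right; exact leaf_unique hu hy hw
    · left; exact leaf_unique hw1 hy hw.symm
  have hsupp : (G.connectedComponentMk u).supp = {u, w} := by
    ext x
    constructor
    · intro hx
      have hr : G.Reachable u x := (SimpleGraph.ConnectedComponent.eq.mp hx).symm
      obtain ⟨p⟩ := hr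
      exact walk_closed _ hclosed p (by left; rfl)
    · rintro (rfl | rfl)
      · rfl
      · exact SimpleGraph.ConnectedComponent.eq.mpr hw.symm.reachable
  have := h2 (G.connectedComponentMk u)
  rw [hsupp, Set.ncard_pair hw.ne] at this
  exact this rfl

lemma edge_start {u w x : V} (p : G.Walk u w) (hp : p.IsPath) (he : s(u, x) ∈ p.edges) :
    x = p.getVert 1 := by
  cases p with
  | nil => simp at he
  | cons h r =>
    rw [SimpleGraph.Walk.edges_cons, List.mem_cons] at he
    rcases he with he | he
    · have := Sym2.congr_right.mp he
      rw [show (SimpleGraph.Walk.cons h r).getVert 1 = r.getVert 0 from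
        SimpleGraph.Walk.getVert_cons_succ r h, SimpleGraph.Walk.getVert_zero]
      exact this
    · exfalso
      have := SimpleGraph.Walk.fst_mem_support_of_mem_edges r he
      rw [SimpleGraph.Walk.cons_isPath_iff] at hp
      exact hp.2 this

lemma exists_deg_le_one [Nonempty V] (hac : G.IsAcyclic) : ∃ v, deg G v ≤ 1 := by
  by_contra h
  push_neg at h
  classical
  set L : Set ℕ := {l | ∃ (u w : V) (p : G.Walk u w), p.IsPath ∧ p.length = l} with hL
  have h0 : (0 : ℕ) ∈ L := by
    obtain ⟨v⟩ := ‹Nonempty V›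
    exact ⟨v, v, SimpleGraph.Walk.nil, SimpleGraph.Walk.IsPath.nil, rfl⟩
  have hbdd : BddAbove L := by
    refine ⟨Fintype.card V, ?_⟩
    rintro l ⟨u, w, p, hp, rfl⟩
    exact hp.length_lt.le
  obtain ⟨u, w, p, hp, hlen⟩ := Nat.sSup_mem ⟨0, h0⟩ hbdd
  -- u has two neighbors, pick one different from p.getVert 1
  have hdu : 1 < {y | G.Adj u y}.ncard := by
    have := h u; rw [deg_eq_ncard] at this; omega
  obtain ⟨x, hx, hxne⟩ := Set.exists_ne_of_one_lt_ncard hdu (p.getVert 1)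
  have hxadj : G.Adj u x := hx
  by_cases hxs : x ∈ p.support
  · -- build a cycle
    have hq : (p.takeUntil x hxs).IsPath := hp.takeUntil hxs
    have hne : s(x, u) ∉ (p.takeUntil x hxs).edges := by
      intro hmem
      have hmem' : s(u, x) ∈ p.edges := by
        have := SimpleGraph.Walk.edges_takeUntil_subset p hxs hmem
        rwa [Sym2.eq_swap] at this
      exact hxne (edge_start p hp hmem')
    exact hac _ ((SimpleGraph.Walk.cons_isCycle_iff (p.takeUntil x hxs) hxadj.symm).mpr ⟨hq, hne⟩)
  · -- extend the path
    have hp' : (SimpleGraph.Walk.cons hxadj.symm p).IsPath := hp.cons hxs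
    have : p.length + 1 ∈ L := ⟨x, w, _, hp', by simp⟩
    have := le_csSup hbdd this
    omega

lemma acyclic_induce (hac : G.IsAcyclic) (s : Set V) : (G.induce s).IsAcyclic := by
  intro v c hc
  exact hac _ (hc.map (f := (SimpleGraph.Embedding.induce s).toHom) Subtype.val_injective)

lemma deg_induce (s : Set V) [Fintype ↥s] (v : V) (hv : v ∈ s) :
    deg (G.induce s) ⟨v, hv⟩ = {u | G.Adj v u ∧ u ∈ s}.ncard := by
  apply Nat.card_congr
  exact ⟨fun x => ⟨x.1.1, x.2, x.1.2⟩, fun y => ⟨⟨y.1, y.2.2⟩, y.2.1⟩,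
    fun x => rfl, fun y => rfl⟩

end Aux

/-- Key lemma: in a finite forest there is a set `D` of size at most `⌈(n-2)/3⌉`
    dominating all vertices of degree at least 2. -/
lemma forest_dom : ∀ (n : ℕ) (V : Type u) [Fintype V] (G : SimpleGraph V),
    Fintype.card V ≤ n → G.IsAcyclic →
    ∃ D : Set V, D.ncard ≤ (Fintype.card V - 2) ⌈/⌉ 3 ∧
      ∀ v, 2 ≤ deg G v → v ∈ D ∨ ∃ u ∈ D, G.Adj u v := by
  intro n
  induction n with
  | zero =>
    intro V _ G hcard hac
    refine ⟨∅, by simp, ?_⟩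
    intro v _
    exact absurd (Fintype.card_pos_iff.mpr ⟨v⟩) (by omega)
  | succ n ih =>
    intro V _ G hcard hac
    classical
    by_cases hdeg : ∀ v, deg G v ≤ 1
    · exact ⟨∅, by simp, fun v hv => absurd (hdeg v) (by omega)⟩
    push_neg at hdeg
    obtain ⟨v0, hv0⟩ := hdeg
    have hv0' : 2 ≤ deg G v0 := by omega
    -- Find v1 of degree ≥ 2 with at most one neighbor of degree ≥ 2.
    set W : Set V := {v | 2 ≤ deg G v} with hW
    letI : Fintype ↥W := Fintype.ofFinite _
    have : Nonempty ↥W := ⟨⟨v0, hv0'⟩⟩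
    obtain ⟨⟨v1, hv1W⟩, hv1d⟩ := exists_deg_le_one (acyclic_induce hac W)
    rw [deg_induce W v1 hv1W] at hv1d
    set B : Set V := {u | G.Adj v1 u ∧ 2 ≤ deg G u} with hB
    have hBd : B.ncard ≤ 1 := by
      refine le_trans (le_of_eq ?_) hv1d
      congr 1
    set A : Set V := {u | G.Adj v1 u ∧ deg G u = 1} with hA
    have hunion : {u | G.Adj v1 u} = A ∪ B := by
      ext u
      simp only [Set.mem_setOf_eq, Set.mem_union, hA, hB]
      constructor
      · intro h
        have := one_le_deg_of_adj h
        rcases Nat.lt_or_ge (deg G u) 2 with h' | h'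
        · exact Or.inl ⟨h, by omega⟩
        · exact Or.inr ⟨h, h'⟩
      · rintro (⟨h, _⟩ | ⟨h, _⟩) <;> exact h
    have hdisj : Disjoint A B := by
      rw [Set.disjoint_left]
      rintro u ⟨_, h1⟩ ⟨_, h2⟩
      omega
    have hsum : A.ncard + B.ncard = deg G v1 := by
      rw [deg_eq_ncard, hunion, Set.ncard_union_eq hdisj (Set.toFinite A) (Set.toFinite B)]
    have hv1deg : 2 ≤ deg G v1 := hv1W
    -- construct x and R
    have hxR : ∃ (x : V) (R : Set V), x ∈ R ∧ R.ncard = 3 ∧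
        (∀ r ∈ R, 2 ≤ deg G r → r = x ∨ G.Adj x r) ∧
        (∀ w ∉ R, (∃ r ∈ R, G.Adj r w) → G.Adj x w) := by
      by_cases hA2 : 1 < A.ncard
      · obtain ⟨l1, l2, hl1, hl2, hll⟩ := (Set.one_lt_ncard_iff (Set.toFinite A)).mp hA2
        refine ⟨v1, {v1, l1, l2}, by left; rfl, ?_, ?_, ?_⟩
        · rw [Set.ncard_insert_of_notMem ?_ (Set.toFinite _), Set.ncard_pair hll]
          rintro (rfl | rfl)
          · exact G.irrefl hl1.1
          · exact G.irrefl hl2.1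
        · intro r hrR hr
          rcases hrR with h | h | h
          · exact Or.inl h
          · rw [h] at hr; exact absurd hr (by have := hl1.2; omega)
          · rw [h] at hr; exact absurd hr (by have := hl2.2; omega)
        · intro w hw hex
          obtain ⟨r, hrR, hr⟩ := hex
          rcases hrR with h | h | h
          · rw [h] at hr; exact hr
          · rw [h] at hr
            have hwv : w = v1 := leaf_unique hl1.2 hr hl1.1.symm
            exact absurd (by rw [hwv]; left; rfl) hw
          · rw [h] at hr
            have hwv : w = v1 := leaf_unique hl2.2 hr hl2.1.symm
            exact absurd (by rw [hwv]; left; rfl) hw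
      · -- A.ncard = 1 and B.ncard = 1
        have hA1 : A.ncard = 1 := by omega
        have hB1 : B.ncard = 1 := by omega
        obtain ⟨a, ha⟩ := Set.ncard_eq_one.mp hA1
        obtain ⟨b, hb⟩ := Set.ncard_eq_one.mp hB1
        have haA : a ∈ A := ha ▸ rfl
        have hbB : b ∈ B := hb ▸ rfl
        have hNab : ∀ c, G.Adj v1 c → c = a ∨ c = b := by
          intro c hc
          have : c ∈ A ∪ B := hunion ▸ hc
          rcases this with h | h
          · exact Or.inl (by rw [ha] at h; exact h)
          · exact Or.inr (by rw [hb] at h; exact h)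
        have hab : a ≠ b := by
          intro h
          have h1 := haA.2; have h2 := hbB.2
          rw [h] at h1
          omega
        refine ⟨b, {a, v1, b}, by right; right; rfl, ?_, ?_, ?_⟩
        · rw [Set.ncard_insert_of_notMem ?_ (Set.toFinite _),
            Set.ncard_pair (fun h => G.irrefl (h ▸ hbB.1))]
          rintro (rfl | rfl)
          · exact G.irrefl haA.1
          · exact hab rfl
        · intro r hrR hr
          rcases hrR with h | h | h
          · rw [h] at hr; exact absurd hr (by have := haA.2; omega)
          · exact Or.inr (h ▸ hbB.1.symm)
          · exact Or.inl h
        · intro w hw hex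
          obtain ⟨r, hrR, hr⟩ := hex
          rcases hrR with h | h | h
          · rw [h] at hr
            have hwv : w = v1 := leaf_unique haA.2 hr haA.1.symm
            exact absurd (by rw [hwv]; right; left; rfl) hw
          · rw [h] at hr
            rcases hNab w hr with hwa | hwb
            · exact absurd (by rw [hwa]; left; rfl) hw
            · exact absurd (by rw [hwb]; right; right; rfl) hw
          · rw [h] at hr; exact hr
    obtain ⟨x, R, hxRmem, hR3, hRdom, hRout⟩ := hxR
    -- recurse on the complement of R
    letI hfin : Fintype ↥(Rᶜ : Set V) := Fintype.ofFinite _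
    have hcardc : Fintype.card ↥(Rᶜ : Set V) = Fintype.card V - 3 := by
      have := Set.ncard_add_ncard_compl R (Set.toFinite R) (Set.toFinite Rᶜ)
      rw [hR3, Nat.card_eq_fintype_card] at this
      have hc : (Rᶜ : Set V).ncard = Nat.card ↥(Rᶜ : Set V) := rfl
      rw [hc, Nat.card_eq_fintype_card] at this
      omega
    have hcardV : 3 ≤ Fintype.card V := by
      have : R.ncard ≤ (Set.univ : Set V).ncard :=
        Set.ncard_le_ncard (Set.subset_univ R) (Set.toFinite _)
      rw [hR3, Set.ncard_univ, Nat.card_eq_fintype_card] at this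
      exact this
    obtain ⟨D'', hD''card, hD''dom⟩ := ih ↥(Rᶜ : Set V) (G.induce Rᶜ)
      (by omega) (acyclic_induce hac Rᶜ)
    refine ⟨insert x (Subtype.val '' D''), ?_, ?_⟩
    · have h1 : (insert x (Subtype.val '' D'')).ncard ≤ (Subtype.val '' D'').ncard + 1 :=
        Set.ncard_insert_le _ _
      have h2 : (Subtype.val '' D'').ncard = D''.ncard :=
        Set.ncard_image_of_injective _ Subtype.val_injective
      rw [hcardc] at hD''card
      rw [Nat.ceilDiv_eq_add_pred_div] at hD''card ⊢
      omega
    · intro v hv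
      by_cases hvR : v ∈ R
      · rcases hRdom v hvR hv with rfl | hadj
        · exact Or.inl (Set.mem_insert _ _)
        · exact Or.inr ⟨x, Set.mem_insert _ _, hadj⟩
      by_cases hadjR : ∃ r ∈ R, G.Adj r v
      · exact Or.inr ⟨x, Set.mem_insert _ _, hRout v hvR hadjR⟩
      push_neg at hadjR
      have hvc : v ∈ (Rᶜ : Set V) := hvR
      have hnbr : ∀ u, G.Adj v u → u ∈ (Rᶜ : Set V) := by
        intro u hu hmem
        exact hadjR u hmem hu.symm
      have hdeg' : 2 ≤ deg (G.induce Rᶜ) ⟨v, hvc⟩ := by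
        rw [deg_induce Rᶜ v hvc]
        refine le_trans ?_ (le_of_eq rfl)
        have : {u | G.Adj v u ∧ u ∈ (Rᶜ : Set V)} = {u | G.Adj v u} := by
          ext u
          exact ⟨fun h => h.1, fun h => ⟨h, hnbr u h⟩⟩
        rw [this, ← deg_eq_ncard]
        exact hv
      rcases hD''dom ⟨v, hvc⟩ hdeg' with hmem | ⟨u, huD, hadj⟩
      · exact Or.inl (Set.mem_insert_of_mem _ ⟨_, hmem, rfl⟩)
      · exact Or.inr ⟨u.1, Set.mem_insert_of_mem _ ⟨u, huD, rfl⟩, hadj⟩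

theorem stmt_17 {V : Type*} [Fintype V] (G : SimpleGraph V) (hac : G.IsAcyclic)
    (hone : ∀ v, 2 ≤ deg G v → {u | G.Adj v u ∧ deg G u = 1}.ncard ≤ 1)
    (hiso : ∀ v, 0 < deg G v)
    (h2 : ∀ C : G.ConnectedComponent, C.supp.ncard ≠ 2)
    (hU : {v | 2 ≤ deg G v ∧ ¬ IsSupport G v}.Nonempty) :
    ∃ D : Set V, IsDomSet G D ∧
      D.ncard ≤ {v | deg G v = 1}.ncard
        + ({v | 2 ≤ deg G v ∧ ¬ IsSupport G v}.ncard - 2) ⌈/⌉ 3 := by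
  classical
  set U : Set V := {v | 2 ≤ deg G v ∧ ¬ IsSupport G v} with hUdef
  set S : Set V := {v | IsSupport G v} with hSdef
  -- S is at most the number of leaves
  have hScard : S.ncard ≤ {v | deg G v = 1}.ncard := by
    have hchoice : ∀ v ∈ S, ∃ u, G.Adj v u ∧ deg G u = 1 := fun v hv => hv.2
    choose! f hfadj hfdeg using hchoice
    refine Set.ncard_le_ncard_of_injOn f ?_ ?_ (Set.toFinite _)
    · intro v hv
      exact hfdeg v hv
    · intro v1 hv1 v2 hv2 heq
      have h1 : G.Adj (f v1) v1 := (hfadj v1 hv1).symm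
      have h2' : G.Adj (f v1) v2 := by rw [heq]; exact (hfadj v2 hv2).symm
      exact leaf_unique (hfdeg v1 hv1) h1 h2'
  -- domination of U via the forest lemma
  letI hfinU : Fintype ↥U := Fintype.ofFinite _
  obtain ⟨DU, hDUcard, hDUdom⟩ := forest_dom (Fintype.card ↥U) ↥U (G.induce U)
    le_rfl (acyclic_induce hac U)
  refine ⟨S ∪ (Subtype.val '' DU), ?_, ?_⟩
  · intro v hv
    rcases Nat.lt_or_ge (deg G v) 2 with hlow | hhigh
    · -- leaf
      have hone' : deg G v = 1 := by have := hiso v; omega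
      obtain ⟨w, hw, hwsup⟩ := support_of_leaf h2 hone'
      exact ⟨w, Or.inl hwsup, hw.symm⟩
    · by_cases hsup : IsSupport G v
      · exact absurd (Or.inl hsup) hv
      by_cases hsn : ∃ w, G.Adj v w ∧ IsSupport G w
      · obtain ⟨w, hw, hwsup⟩ := hsn
        exact ⟨w, Or.inl hwsup, hw.symm⟩
      push_neg at hsn
      -- all neighbors of v are in U
      have hvU : v ∈ U := ⟨hhigh, hsup⟩
      have hnbrU : ∀ u, G.Adj v u → u ∈ U := by
        intro u hu
        have h1 : 1 ≤ deg G u := one_le_deg_of_adj hu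
        have hne1 : deg G u ≠ 1 := by
          intro h
          exact hsup ⟨hhigh, u, hu, h⟩
        exact ⟨by omega, hsn u hu⟩
      have hdeg' : 2 ≤ deg (G.induce U) ⟨v, hvU⟩ := by
        rw [deg_induce U v hvU]
        have : {u | G.Adj v u ∧ u ∈ U} = {u | G.Adj v u} := by
          ext u
          exact ⟨fun h => h.1, fun h => ⟨h, hnbrU u h⟩⟩
        rw [this, ← deg_eq_ncard]
        exact hhigh
      rcases hDUdom ⟨v, hvU⟩ hdeg' with hmem | ⟨u, huD, hadj⟩
      · exact absurd (Or.inr ⟨_, hmem, rfl⟩) hv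
      · exact ⟨u.1, Or.inr ⟨u, huD, rfl⟩, hadj⟩
  · have h1 : (S ∪ Subtype.val '' DU).ncard ≤ S.ncard + (Subtype.val '' DU).ncard :=
      Set.ncard_union_le _ _
    have h2' : (Subtype.val '' DU).ncard = DU.ncard :=
      Set.ncard_image_of_injective _ Subtype.val_injective
    have hcardU : Fintype.card ↥U = U.ncard := by
      rw [Set.ncard_eq_toFinset_card']
      exact (Set.toFinset_card U).symm
    rw [hcardU] at hDUcard
    omega
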